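/- Let ⟨(Y_i, ℬ_i)⟩_{i∈I} be a family of countably separated measurable spaces with card I ≤ 𝔠 (the cardinality of the continuum). Then the disjoint union ⨿_{i∈I} Y_i, equipped with the σ-algebra {A : A ∩ Y_i ∈ ℬ_i for every i ∈ I}, is countably separated. -/

import Mathlib

open Set MeasureTheory ENNReal

namespace MSNPaper

variable {X Y : Type*}

/-- `A` is a σ-algebra of subsets of the carrier set `Z`. -/
def IsSigmaAlgebraOn (Z : Set X) (A : Set (Set X)) : Prop :=
  (∀ s ∈ A, s ⊆ Z) ∧ ∅ ∈ A ∧ (∀ s ∈ A, Z \ s ∈ A) ∧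
    ∀ f : ℕ → Set X, (∀ n, f n ∈ A) → (⋃ n, f n) ∈ A

/-- `N` is a σ-ideal of the σ-algebra `A`. -/
def IsSigmaIdeal (A N : Set (Set X)) : Prop :=
  N ⊆ A ∧ ∅ ∈ N ∧ (∀ s ∈ A, ∀ t ∈ N, s ⊆ t → s ∈ N) ∧
    ∀ f : ℕ → Set X, (∀ n, f n ∈ N) → (⋃ n, f n) ∈ N

/-- A measurable space with negligibles (MSN) on the carrier set `Z`. -/
def IsMSN (Z : Set X) (A N : Set (Set X)) : Prop :=
  IsSigmaAlgebraOn Z A ∧ IsSigmaIdeal A N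

/-- The MSN is saturated: every subset of a negligible set is negligible. -/
def Saturated (N : Set (Set X)) : Prop :=
  ∀ s t : Set X, s ⊆ t → t ∈ N → s ∈ N

/-- `U` is an `N`-essential upper bound of the collection `E`. -/
def IsEssUB (N E : Set (Set X)) (U : Set X) : Prop :=
  ∀ e ∈ E, e \ U ∈ N

/-- `S` is an `N`-essential supremum of the collection `E ⊆ A`. -/
def IsEssSup (A N E : Set (Set X)) (S : Set X) : Prop :=
  S ∈ A ∧ IsEssUB N E S ∧ ∀ U ∈ A, IsEssUB N E U → S \ U ∈ N

/-- Every collection of measurable sets admits an essential supremum. -/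
def Localizable (A N : Set (Set X)) : Prop :=
  ∀ E ⊆ A, ∃ S, IsEssSup A N E S

/-- The members of `E` pairwise intersect negligibly. -/
def AlmostDisjointed (N E : Set (Set X)) : Prop :=
  E.Pairwise fun e e' => e ∩ e' ∈ N

/-- Countable chain condition: almost disjointed families of non-negligible
measurable sets are countable. -/
def CCC (A N : Set (Set X)) : Prop :=
  ∀ E : Set (Set X), E ⊆ A → (∀ e ∈ E, e ∉ N) → AlmostDisjointed N E → E.Countable

/-- Local determination for an MSN with carrier `Z`. -/
def LocallyDetermined (Z : Set X) (A N : Set (Set X)) : Prop :=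
  ∀ E ⊆ A, IsEssSup A N E Z → ∀ s ⊆ Z, (∀ e ∈ E, s ∩ e ∈ A) → s ∈ A

/-- Trace of a collection of sets on a subset `Z`. -/
def Sub (A : Set (Set X)) (Z : Set X) : Set (Set X) := (· ∩ Z) '' A


/-- The coproduct σ-algebra / σ-ideal on the disjoint union of a family of MSNs:
a set is measurable (negligible) iff its trace on each summand is. -/
def coProd {I : Type*} {Xf : I → Type*} (A : ∀ i, Set (Set (Xf i))) :
    Set (Set ((i : I) × Xf i)) :=
  {s | ∀ i, Sigma.mk i ⁻¹' s ∈ A i}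

/-- A measurable space structure `B` is countably separated if some countable
subfamily of `B` separates points. -/
def CtblySeparated {Y : Type*} (B : Set (Set Y)) : Prop :=
  ∃ C ⊆ B, C.Countable ∧ ∀ y₁ y₂ : Y, y₁ ≠ y₂ → ∃ c ∈ C, Xor' (y₁ ∈ c) (y₂ ∈ c)

/-- A disjoint union of at most continuum many countably separated measurable spaces
is countably separated. -/
theorem coprod_ctblySeparated {I : Type*} {Yf : I → Type*}
    (B : ∀ i, Set (Set (Yf i)))
    (hB : ∀ i, IsSigmaAlgebraOn Set.univ (B i))
    (hcs : ∀ i, CtblySeparated (B i))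
    (hI : Cardinal.mk I ≤ Cardinal.continuum) :
    CtblySeparated (coProd B) := by
  classical
  -- univ and ∅ belong to each B i
  have hempty : ∀ i, (∅ : Set (Yf i)) ∈ B i := fun i => (hB i).2.1
  have huniv : ∀ i, (Set.univ : Set (Yf i)) ∈ B i := by
    intro i
    have := (hB i).2.2.1 ∅ (hempty i)
    simpa using this
  -- enumerate a separating family in each B i
  have hc : ∀ i, ∃ c : ℕ → Set (Yf i), (∀ n, c n ∈ B i) ∧
      ∀ y₁ y₂ : Yf i, y₁ ≠ y₂ → ∃ n, Xor' (y₁ ∈ c n) (y₂ ∈ c n) := by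
    intro i
    obtain ⟨C, hCB, hCc, hCsep⟩ := hcs i
    obtain ⟨g, hg⟩ := ((hCc.insert ∅).exists_eq_range (Set.insert_nonempty _ _))
    refine ⟨g, ?_, ?_⟩
    · intro n
      have hgn : g n ∈ insert ∅ C := hg ▸ Set.mem_range_self n
      rcases hgn with h | h
      · rw [h]; exact hempty i
      · exact hCB h
    · intro y₁ y₂ hne
      obtain ⟨c, hcC, hx⟩ := hCsep y₁ y₂ hne
      have : c ∈ Set.range g := hg ▸ Set.mem_insert_of_mem _ hcC
      obtain ⟨n, rfl⟩ := this
      exact ⟨n, hx⟩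
  choose c hcB hcsep using hc
  -- an injection from I into Set ℕ
  have hIe : Nonempty (I ↪ ULift.{_} (Set ℕ)) := by
    rw [← Cardinal.le_def]
    have : Cardinal.mk (ULift.{_} (Set ℕ)) = Cardinal.continuum := by
      rw [Cardinal.mk_uLift, Cardinal.mk_set, Cardinal.mk_nat,
        Cardinal.two_power_aleph0, Cardinal.lift_continuum]
    rw [this]
    exact hI
  obtain ⟨f⟩ := hIe
  -- the separating family on the disjoint union
  let D : ℕ → Set ((i : I) × Yf i) := fun n => {p | p.2 ∈ c p.1 n}
  let E : ℕ → Set ((i : I) × Yf i) := fun n => {p | n ∈ (f p.1).down}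
  refine ⟨Set.range D ∪ Set.range E, ?_, ?_, ?_⟩
  · rintro s (⟨n, rfl⟩ | ⟨n, rfl⟩)
    · intro i
      have : Sigma.mk i ⁻¹' D n = c i n := rfl
      rw [this]; exact hcB i n
    · intro i
      by_cases h : n ∈ (f i).down
      · have : Sigma.mk i ⁻¹' E n = Set.univ := by
          ext y; simp [E, h]
        rw [this]; exact huniv i
      · have : Sigma.mk i ⁻¹' E n = ∅ := by
          ext y; simp [E, h]
        rw [this]; exact hempty i
  · exact (Set.countable_range D).union (Set.countable_range E)
  · rintro ⟨i, y⟩ ⟨j, z⟩ hne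
    by_cases hij : i = j
    · subst hij
      have hyz : y ≠ z := fun h => hne (by rw [h])
      obtain ⟨n, hn⟩ := hcsep i y z hyz
      exact ⟨D n, Or.inl (Set.mem_range_self n), hn⟩
    · have hf : (f i).down ≠ (f j).down := by
        intro h
        exact hij (f.injective (ULift.ext _ _ h))
      have : ∃ n, ¬ (n ∈ (f i).down ↔ n ∈ (f j).down) := by
        by_contra h
        push_neg at h
        exact hf (Set.ext h)
      obtain ⟨n, hn⟩ := this
      refine ⟨E n, Or.inr (Set.mem_range_self n), ?_⟩
      rw [show Xor' = Xor from rfl, xor_iff_not_iff]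
      exact hn

end MSNPaper
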